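/- Let F, G, f, g be continuously differentiable and let f and each g_i, i = 1,…,q, be convex as functions of the joint variable (x,y). Let (x̄,ȳ) be a local optimal solution of (LLVFR), suppose (LLVFR) is partially calm on (x,y) ↦ f(x,y) − φ(x) at (x̄,ȳ), and assume both the LMFCQ and the LLVF-MFCQ hold at (x̄,ȳ). Then there exist λ > 0, u ∈ ℝᵖ, v, w ∈ ℝ^q and z ∈ ℝᵐ such that: (a) ∇F(x̄,ȳ) + ∇G(x̄,ȳ)ᵀu + ∇g(x̄,ȳ)ᵀv + λ∇f(x̄,ȳ) − λ(∇_x f(x̄,z) + ∇_x g(x̄,z)ᵀw, 0) = 0; (b) ∇_y f(x̄,z) + ∇_y g(x̄,z)ᵀw = 0; (c) u ≥ 0, G(x̄,ȳ) ≤ 0, uᵀG(x̄,ȳ) = 0; (d) v ≥ 0, g(x̄,ȳ) ≤ 0, vᵀg(x̄,ȳ) = 0; (e) w ≥ 0, g(x̄,z) ≤ 0, wᵀg(x̄,z) = 0. -/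

import Mathlib

open Filter Topology

section Aux

variable {E : Type*} [NormedAddCommGroup E] [NormedSpace ℝ E]

lemma gordan {ι : Type*} [Fintype ι] (a : ι → (E →L[ℝ] ℝ))
    (hno : ¬ ∃ d : E, ∀ i, (a i) d < 0) :
    ∃ μ : ι → ℝ, (∀ i, 0 ≤ μ i) ∧ (0 < ∑ i, μ i) ∧ ∑ i, μ i • a i = 0 := by
  classical
  set T : E →ₗ[ℝ] (ι → ℝ) := LinearMap.pi (fun i => (a i : E →ₗ[ℝ] ℝ)) with hT
  set S : Submodule ℝ (ι → ℝ) := LinearMap.range T with hS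
  set s : Set (ι → ℝ) := {v | ∀ i, v i < 0} with hs
  have hsopen : IsOpen s := by
    have : s = ⋂ i, {v : ι → ℝ | v i < 0} := by
      ext v; simp [hs, Set.mem_iInter]
    rw [this]
    exact isOpen_iInter_of_finite fun i => isOpen_lt (continuous_apply i) continuous_const
  have hsconv : Convex ℝ s := by
    have : s = ⋂ i, {v : ι → ℝ | v i < 0} := by
      ext v; simp [hs, Set.mem_iInter]
    rw [this]
    exact convex_iInter fun i =>
      convex_halfSpace_lt ⟨fun v w => by simp, fun c v => by simp⟩ 0
  have hdisj : Disjoint s (S : Set (ι → ℝ)) := by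
    rw [Set.disjoint_left]
    rintro v hv ⟨d, rfl⟩
    exact hno ⟨d, fun i => hv i⟩
  obtain ⟨φ, u, hφs, hφS⟩ := geometric_hahn_banach_open hsconv hsopen S.convex hdisj
  have hu0 : u ≤ 0 := by simpa using hφS 0 S.zero_mem
  have hφS0 : ∀ b ∈ S, φ b = 0 := by
    intro b hb
    by_contra hne
    have h1 : u ≤ φ (((u - 1) / φ b) • b) := hφS _ (S.smul_mem _ hb)
    rw [map_smul, smul_eq_mul, div_mul_cancel₀ _ hne] at h1
    linarith
  set μ : ι → ℝ := fun i => φ ((Pi.single i (1:ℝ) : ι → ℝ)) with hμ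
  have hrepr : ∀ v : ι → ℝ, φ v = ∑ i, v i * μ i := by
    intro v
    have hv : v = ∑ i, v i • (Pi.single i (1 : ℝ) : ι → ℝ) := by
      funext j
      simp [Finset.sum_apply, Pi.single_apply]
    conv_lhs => rw [hv]
    simp [map_sum, map_smul, hμ]
  have hneg1 : φ (fun _ => (-1 : ℝ)) < u := hφs _ (fun i => by norm_num)
  have hμnn : ∀ i, 0 ≤ μ i := by
    intro j
    by_contra hj
    push_neg at hj
    have h2 : (0:ℝ) < -μ j := by linarith
    have h1 : (0:ℝ) < u - φ (fun _ => (-1 : ℝ)) := by linarith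
    obtain ⟨t, ht⟩ : ∃ t : ℝ, t = (u - φ (fun _ => (-1 : ℝ))) / (-μ j) + 1 := ⟨_, rfl⟩
    have hdivpos := div_pos h1 h2
    have htpos : 0 < t := by rw [ht]; linarith
    have hmem : ((fun _ => (-1 : ℝ)) + t • (Pi.single j (-1 : ℝ) : ι → ℝ)) ∈ s := by
      intro i
      by_cases hij : i = j
      · subst hij; simp [Pi.single_apply]; nlinarith
      · simp [Pi.single_apply, hij]
    have hlt := hφs _ hmem
    rw [map_add, map_smul, smul_eq_mul] at hlt
    have hsingle : φ ((Pi.single j (-1 : ℝ) : ι → ℝ)) = -μ j := by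
      have h : (Pi.single j (-1 : ℝ) : ι → ℝ) = (-1 : ℝ) • (Pi.single j (1 : ℝ) : ι → ℝ) := by
        funext i; by_cases hij : i = j <;> simp [Pi.single_apply, hij]
      rw [h, map_smul, smul_eq_mul]; ring_nf; rfl
    rw [hsingle] at hlt
    have hdiv : (u - φ (fun _ => (-1 : ℝ))) / (-μ j) * (-μ j) = u - φ (fun _ => (-1 : ℝ)) :=
      div_mul_cancel₀ _ (by linarith)
    have key : u - φ (fun _ => (-1 : ℝ)) ≤ t * (-μ j) := by
      rw [← hdiv]
      apply mul_le_mul_of_nonneg_right _ h2.le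
      linarith
    linarith
  have hsum : φ (fun _ => (-1 : ℝ)) = -∑ i, μ i := by
    rw [hrepr]
    simp
  refine ⟨μ, hμnn, by nlinarith [hneg1, hu0, hsum], ?_⟩
  ext d
  have hmem : T d ∈ S := ⟨d, rfl⟩
  have := hφS0 _ hmem
  rw [hrepr] at this
  simpa [ContinuousLinearMap.sum_apply, mul_comm, hT] using this

lemma eventually_lt_of_hasDerivAt_neg {h : ℝ → ℝ} {v : ℝ} (hd : HasDerivAt h v 0) (hv : v < 0) :
    ∀ᶠ t in 𝓝[>] (0:ℝ), h t < h 0 := by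
  have hs : Filter.Tendsto (slope h 0) (𝓝[>] (0:ℝ)) (𝓝 v) :=
    (hasDerivAt_iff_tendsto_slope.1 hd).mono_left
      (nhdsWithin_mono _ (fun t ht => ne_of_gt ht))
  have hev : ∀ᶠ t in 𝓝[>] (0:ℝ), slope h 0 t < 0 := hs.eventually_lt_const hv
  filter_upwards [hev, self_mem_nhdsWithin] with t hslope (htpos : 0 < t)
  rw [slope_def_field] at hslope
  have := (div_neg_iff).1 (by simpa using hslope)
  rcases this with ⟨h1, h2⟩ | ⟨h1, h2⟩
  · linarith
  · linarith

lemma kkt {ι : Type*} [Fintype ι] {c₀ : E → ℝ} {c : ι → E → ℝ} {xbar : E}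
    {D₀ : E →L[ℝ] ℝ} {D : ι → (E →L[ℝ] ℝ)}
    (hd₀ : HasFDerivAt c₀ D₀ xbar) (hd : ∀ i, HasFDerivAt (c i) (D i) xbar)
    (hfeas : ∀ i, c i xbar ≤ 0)
    (hloc : ∀ᶠ x in 𝓝 xbar, (∀ i, c i x ≤ 0) → c₀ xbar ≤ c₀ x)
    (hmfcq : ∃ d, ∀ i, c i xbar = 0 → (D i) d < 0) :
    ∃ μ : ι → ℝ, (∀ i, 0 ≤ μ i) ∧ (∀ i, μ i * c i xbar = 0) ∧
      D₀ + ∑ i, μ i • D i = 0 := by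
  classical
  set P : Type _ := {i : ι // c i xbar = 0} with hP
  set a : Option P → (E →L[ℝ] ℝ) := fun o => Option.elim o D₀ (fun s => D s.1) with ha
  have hnd : ¬ ∃ d : E, ∀ o : Option P, (a o) d < 0 := by
    rintro ⟨d, hdlt⟩
    have h0 : D₀ d < 0 := hdlt none
    set γ : ℝ → E := fun t => xbar + t • d with hγ
    have hγ0 : γ 0 = xbar := by simp [hγ]
    have hγd : HasDerivAt γ d 0 := by
      simpa [hγ] using ((hasDerivAt_id (0:ℝ)).smul_const d).const_add xbar
    have hγt : Filter.Tendsto γ (𝓝[>] (0:ℝ)) (𝓝 xbar) := by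
      have : Continuous γ := by continuity
      rw [← hγ0]
      exact (this.tendsto 0).mono_left nhdsWithin_le_nhds
    have hcomp : ∀ (h : E → ℝ) (Dh : E →L[ℝ] ℝ), HasFDerivAt h Dh xbar →
        HasDerivAt (fun t => h (γ t)) (Dh d) 0 := by
      intro h Dh hh
      exact (hγ0 ▸ hh : HasFDerivAt h Dh (γ 0)).comp_hasDerivAt 0 hγd
    have E1 : ∀ᶠ t in 𝓝[>] (0:ℝ), c₀ (γ t) < c₀ xbar := by
      have := eventually_lt_of_hasDerivAt_neg (hcomp c₀ D₀ hd₀) h0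
      simpa [hγ0] using this
    have E2 : ∀ᶠ t in 𝓝[>] (0:ℝ), ∀ i, c i (γ t) ≤ 0 := by
      rw [eventually_all]
      intro i
      by_cases hi : c i xbar = 0
      · have hlt : (D i) d < 0 := hdlt (some ⟨i, hi⟩)
        have := eventually_lt_of_hasDerivAt_neg (hcomp (c i) (D i) (hd i)) hlt
        filter_upwards [this] with t ht
        rw [hγ0, hi] at ht
        exact ht.le
      · have hneg : c i xbar < 0 := lt_of_le_of_ne (hfeas i) hi
        have htend : Filter.Tendsto (fun t => c i (γ t)) (𝓝[>] (0:ℝ)) (𝓝 (c i xbar)) := by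
          exact ((hd i).continuousAt.tendsto.comp hγt)
        filter_upwards [htend.eventually_lt_const (by linarith : c i xbar < 0)] with t ht
        exact ht.le
    have E3 : ∀ᶠ t in 𝓝[>] (0:ℝ), (∀ i, c i (γ t) ≤ 0) → c₀ xbar ≤ c₀ (γ t) :=
      hγt.eventually hloc
    obtain ⟨t, ht⟩ := ((E1.and E2).and E3).exists
    exact absurd (ht.2 ht.1.2) (not_le.2 ht.1.1)
  obtain ⟨ν, hνnn, hνsum, hνeq⟩ := gordan a hnd
  rw [Fintype.sum_option] at hνeq hνsum
  simp only [ha, Option.elim] at hνeq hνsum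
  obtain ⟨d, hdm⟩ := hmfcq
  have hνnone : 0 < ν none := by
    rcases lt_or_eq_of_le (hνnn none) with h | h
    · exact h
    exfalso
    rw [← h, zero_smul, zero_add] at hνeq
    have happ : ∑ s : P, ν (some s) * (D s.1) d = 0 := by
      have := congrArg (fun L : E →L[ℝ] ℝ => L d) hνeq
      simpa [ContinuousLinearMap.sum_apply] using this
    have hzero : ∀ s : P, ν (some s) * (D s.1) d = 0 := by
      have := (Finset.sum_eq_zero_iff_of_nonpos (fun s _ =>
        mul_nonpos_of_nonneg_of_nonpos (hνnn (some s)) (hdm s.1 s.2).le)).1 happ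
      exact fun s => this s (Finset.mem_univ s)
    have hν0 : ∀ s : P, ν (some s) = 0 := by
      intro s
      rcases mul_eq_zero.1 (hzero s) with h' | h'
      · exact h'
      · exact absurd h' (ne_of_lt (hdm s.1 s.2))
    rw [← h] at hνsum
    simp [hν0] at hνsum
  refine ⟨fun i => if hi : c i xbar = 0 then ν (some ⟨i, hi⟩) * (ν none)⁻¹ else 0,
    fun i => ?_, fun i => ?_, ?_⟩
  · by_cases hi : c i xbar = 0
    · simp only [dif_pos hi]
      exact mul_nonneg (hνnn _) (inv_nonneg.2 hνnone.le)
    · simp [dif_neg hi]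
  · by_cases hi : c i xbar = 0
    · simp [hi]
    · simp [dif_neg hi]
  · have hsplit : ∑ i : ι, (if hi : c i xbar = 0 then ν (some ⟨i, hi⟩) * (ν none)⁻¹ else 0) • D i
        = ∑ s : P, (ν (some s) * (ν none)⁻¹) • D s.1 := by
      rw [← Fintype.sum_subtype_add_sum_subtype (fun i => c i xbar = 0)
        (fun i => (if hi : c i xbar = 0 then ν (some ⟨i, hi⟩) * (ν none)⁻¹ else 0) • D i)]
      have h2 : ∑ s : {i : ι // ¬ c i xbar = 0},
          (if hi : c s.1 xbar = 0 then ν (some ⟨s.1, hi⟩) * (ν none)⁻¹ else 0) • D s.1 = 0 := by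
        apply Finset.sum_eq_zero
        intro s _
        rw [dif_neg s.2, zero_smul]
      rw [h2, add_zero]
      apply Finset.sum_congr rfl
      intro s _
      rw [dif_pos s.2]
    rw [hsplit]
    have : ∑ s : P, (ν (some s) * (ν none)⁻¹) • D s.1
        = (ν none)⁻¹ • ∑ s : P, ν (some s) • D s.1 := by
      rw [Finset.smul_sum]
      apply Finset.sum_congr rfl
      intro s _
      rw [smul_smul, mul_comm]
    rw [this]
    have hsum2 : ∑ s : P, ν (some s) • D s.1 = -(ν none • D₀) := by
      linear_combination (norm := abel) hνeq
    rw [hsum2, smul_neg, smul_smul, inv_mul_cancel₀ (ne_of_gt hνnone), one_smul]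
    abel

lemma convexOn_ge_tangent {h : E → ℝ} {D : E →L[ℝ] ℝ} {x y : E}
    (hc : ConvexOn ℝ Set.univ h) (hd : HasFDerivAt h D x) : h x + D (y - x) ≤ h y := by
  set φ : ℝ → ℝ := fun t => h (x + t • (y - x)) with hφ
  have hφd : HasDerivAt φ (D (y - x)) 0 := by
    have hγ : HasDerivAt (fun t : ℝ => x + t • (y - x)) (y - x) 0 := by
      simpa using ((hasDerivAt_id (0:ℝ)).smul_const (y - x)).const_add x
    have hd' : HasFDerivAt h D ((fun t : ℝ => x + t • (y - x)) 0) := by simpa using hd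
    exact hd'.comp_hasDerivAt 0 hγ
  have hφ0 : φ 0 = h x := by simp [hφ]
  have key : ∀ᶠ t in 𝓝[>] (0:ℝ), slope φ 0 t ≤ h y - h x := by
    filter_upwards [Ioc_mem_nhdsGT_of_mem (by norm_num : (0:ℝ) ∈ Set.Ico (0:ℝ) 1)]
      with t ht
    rw [slope_def_field]
    have hcvx := hc.2 (Set.mem_univ x) (Set.mem_univ y)
      (by linarith [ht.2] : (0:ℝ) ≤ 1 - t) ht.1.le (by ring)
    have heq : (1 - t) • x + t • y = x + t • (y - x) := by
      rw [smul_sub, sub_smul, one_smul]; abel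
    rw [heq] at hcvx
    have hφt : φ t ≤ (1 - t) * h x + t * h y := by simpa [hφ, smul_eq_mul] using hcvx
    rw [hφ0]
    rw [div_le_iff₀ (by simpa using ht.1)]
    nlinarith
  have htend : Filter.Tendsto (slope φ 0) (𝓝[>] (0:ℝ)) (𝓝 (D (y - x))) :=
    (hasDerivAt_iff_tendsto_slope.1 hφd).mono_left
      (nhdsWithin_mono _ (fun t ht => ne_of_gt ht))
  have := le_of_tendsto htend key
  linarith


lemma hasFDerivAt_partial_right {E F : Type*} [NormedAddCommGroup E] [NormedSpace ℝ E]
    [NormedAddCommGroup F] [NormedSpace ℝ F] {h : E × F → ℝ} {x₀ : E} {y₀ : F}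
    (hd : DifferentiableAt ℝ h (x₀, y₀)) :
    HasFDerivAt (fun y => h (x₀, y))
      ((fderiv ℝ h (x₀, y₀)).comp (ContinuousLinearMap.inr ℝ E F)) y₀ :=
  hd.hasFDerivAt.comp y₀ (hasFDerivAt_prodMk_right x₀ y₀)

lemma hasFDerivAt_partial_left {E F : Type*} [NormedAddCommGroup E] [NormedSpace ℝ E]
    [NormedAddCommGroup F] [NormedSpace ℝ F] {h : E × F → ℝ} {x₀ : E} {y₀ : F}
    (hd : DifferentiableAt ℝ h (x₀, y₀)) :
    HasFDerivAt (fun x => h (x, y₀))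
      ((fderiv ℝ h (x₀, y₀)).comp (ContinuousLinearMap.inl ℝ E F)) x₀ :=
  hd.hasFDerivAt.comp x₀ (hasFDerivAt_prodMk_left x₀ y₀)

end Aux



/-- `Vec k` is the Euclidean space `ℝ^k`. -/
abbrev Vec (k : ℕ) := Fin k → ℝ

/-- The lower-level optimal value function `φ(x) = inf {f(x,y) : g(x,y) ≤ 0}`,
with values in the extended reals (`+∞` if the lower-level feasible set is empty). -/
noncomputable def phi {n m q : ℕ} (f : Vec n → Vec m → ℝ) (g : Vec n → Vec m → Vec q)
    (x : Vec n) : EReal :=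
  ⨅ y ∈ {y : Vec m | ∀ i, g x y i ≤ 0}, (f x y : EReal)

set_option maxHeartbeats 1000000 in
/-- Necessary optimality conditions for the value function
reformulation (LLVFR) under full convexity, partial calmness, the LMFCQ and the
LLVF-MFCQ. -/
theorem stmt_12
    {n m p q : ℕ} (hn : 0 < n) (hm : 0 < m) (hp : 0 < p) (hq : 0 < q)
    (F : Vec n → Vec m → ℝ) (G : Vec n → Vec m → Vec p)
    (f : Vec n → Vec m → ℝ) (g : Vec n → Vec m → Vec q)
    (hF : ContDiff ℝ 1 (fun pq : Vec n × Vec m => F pq.1 pq.2))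
    (hG : ContDiff ℝ 1 (fun pq : Vec n × Vec m => G pq.1 pq.2))
    (hf : ContDiff ℝ 1 (fun pq : Vec n × Vec m => f pq.1 pq.2))
    (hg : ContDiff ℝ 1 (fun pq : Vec n × Vec m => g pq.1 pq.2))
    -- f and each gᵢ are fully convex
    (hfconv : ConvexOn ℝ Set.univ (fun pq : Vec n × Vec m => f pq.1 pq.2))
    (hgconv : ∀ i, ConvexOn ℝ Set.univ (fun pq : Vec n × Vec m => g pq.1 pq.2 i))
    (xb : Vec n) (yb : Vec m)
    -- (xb, yb) is feasible for (LLVFR)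
    (hfeas : (∀ j, G xb yb j ≤ 0) ∧ (∀ k, g xb yb k ≤ 0) ∧
      (f xb yb : EReal) ≤ phi f g xb)
    -- (xb, yb) is a local optimal solution of (LLVFR)
    (hloc : ∃ ε > (0 : ℝ), ∀ (x : Vec n) (y : Vec m), dist (x, y) (xb, yb) < ε →
      (∀ j, G x y j ≤ 0) → (∀ k, g x y k ≤ 0) → ((f x y : EReal) ≤ phi f g x) →
      F xb yb ≤ F x y)
    -- (LLVFR) is partially calm on (x,y) ↦ f(x,y) − φ(x) at (xb, yb)
    (hcalm : ∃ lam0 > (0 : ℝ), ∃ ε > (0 : ℝ), ∀ (x : Vec n) (y : Vec m),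
      dist (x, y) (xb, yb) < ε →
      (∀ j, G x y j ≤ 0) → (∀ k, g x y k ≤ 0) →
      (F xb yb : EReal) + (lam0 : ℝ) * ((f xb yb : EReal) - phi f g xb) ≤
        (F x y : EReal) + (lam0 : ℝ) * ((f x y : EReal) - phi f g x))
    -- LMFCQ at (xb, yb)
    (hLMFCQ : ∃ d : Vec m, ∀ k, g xb yb k = 0 →
      fderiv ℝ (fun y => g xb y k) yb d < 0)
    -- LLVF-MFCQ at (xb, yb)
    (hMFCQ : ∃ d : Vec n × Vec m,
      (∀ j, G xb yb j = 0 →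
        fderiv ℝ (fun pq : Vec n × Vec m => G pq.1 pq.2 j) (xb, yb) d < 0) ∧
      (∀ k, g xb yb k = 0 →
        fderiv ℝ (fun pq : Vec n × Vec m => g pq.1 pq.2 k) (xb, yb) d < 0)) :
    ∃ lam > (0 : ℝ), ∃ (u : Vec p) (v w : Vec q) (z : Vec m),
      -- (a)
      (fderiv ℝ (fun pq : Vec n × Vec m => F pq.1 pq.2) (xb, yb)
        + ∑ j, u j • fderiv ℝ (fun pq : Vec n × Vec m => G pq.1 pq.2 j) (xb, yb)
        + ∑ k, v k • fderiv ℝ (fun pq : Vec n × Vec m => g pq.1 pq.2 k) (xb, yb)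
        + lam • fderiv ℝ (fun pq : Vec n × Vec m => f pq.1 pq.2) (xb, yb)
        - lam • ((fderiv ℝ (fun x => f x z) xb
            + ∑ k, w k • fderiv ℝ (fun x => g x z k) xb).comp
              (ContinuousLinearMap.fst ℝ (Vec n) (Vec m)))
        = 0) ∧
      -- (b)
      (fderiv ℝ (f xb) z + ∑ k, w k • fderiv ℝ (fun y => g xb y k) z = 0) ∧
      -- (c)
      ((∀ j, 0 ≤ u j) ∧ (∀ j, G xb yb j ≤ 0) ∧ ∑ j, u j * G xb yb j = 0) ∧
      -- (d)
      ((∀ k, 0 ≤ v k) ∧ (∀ k, g xb yb k ≤ 0) ∧ ∑ k, v k * g xb yb k = 0) ∧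
      -- (e)
      ((∀ k, 0 ≤ w k) ∧ (∀ k, g xb z k ≤ 0) ∧ ∑ k, w k * g xb z k = 0) := by
  classical
  obtain ⟨hGfeas, hgfeas, hphi_ge⟩ := hfeas
  -- differentiability of the full maps
  have hffd : Differentiable ℝ (fun pq : Vec n × Vec m => f pq.1 pq.2) :=
    hf.differentiable one_ne_zero
  have hFfd : Differentiable ℝ (fun pq : Vec n × Vec m => F pq.1 pq.2) :=
    hF.differentiable one_ne_zero
  have hgfd : ∀ k, Differentiable ℝ (fun pq : Vec n × Vec m => g pq.1 pq.2 k) := fun k =>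
    (ContinuousLinearMap.proj k : (Vec q) →L[ℝ] ℝ).differentiable.comp (hg.differentiable one_ne_zero)
  have hGfd : ∀ j, Differentiable ℝ (fun pq : Vec n × Vec m => G pq.1 pq.2 j) := fun j =>
    (ContinuousLinearMap.proj j : (Vec p) →L[ℝ] ℝ).differentiable.comp (hG.differentiable one_ne_zero)
  -- phi xb = f xb yb
  have hphi_le : phi f g xb ≤ (f xb yb : EReal) := by
    unfold phi
    exact iInf₂_le yb hgfeas
  have hphixb : phi f g xb = (f xb yb : EReal) := le_antisymm hphi_le hphi_ge
  -- yb is a global minimizer of the lower-level problem at xb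
  have hlow : ∀ y, (∀ k, g xb y k ≤ 0) → f xb yb ≤ f xb y := by
    intro y hy
    have h1 : phi f g xb ≤ (f xb y : EReal) := by
      unfold phi; exact iInf₂_le y hy
    rw [hphixb] at h1
    exact_mod_cast h1
  -- partial derivatives in y
  have hfy : HasFDerivAt (fun y => f xb y)
      ((fderiv ℝ (fun pq : Vec n × Vec m => f pq.1 pq.2) (xb, yb)).comp
        (ContinuousLinearMap.inr ℝ (Vec n) (Vec m))) yb :=
    hasFDerivAt_partial_right (hffd (xb, yb))
  have hgy : ∀ k, HasFDerivAt (fun y => g xb y k)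
      ((fderiv ℝ (fun pq : Vec n × Vec m => g pq.1 pq.2 k) (xb, yb)).comp
        (ContinuousLinearMap.inr ℝ (Vec n) (Vec m))) yb := fun k =>
    hasFDerivAt_partial_right (hgfd k (xb, yb))
  -- partial derivatives in x
  have hfx : HasFDerivAt (fun x => f x yb)
      ((fderiv ℝ (fun pq : Vec n × Vec m => f pq.1 pq.2) (xb, yb)).comp
        (ContinuousLinearMap.inl ℝ (Vec n) (Vec m))) xb :=
    hasFDerivAt_partial_left (hffd (xb, yb))
  have hgx : ∀ k, HasFDerivAt (fun x => g x yb k)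
      ((fderiv ℝ (fun pq : Vec n × Vec m => g pq.1 pq.2 k) (xb, yb)).comp
        (ContinuousLinearMap.inl ℝ (Vec n) (Vec m))) xb := fun k =>
    hasFDerivAt_partial_left (hgfd k (xb, yb))
  -- the stated partial fderivs coincide with compositions
  have hfy_eq : fderiv ℝ (f xb) yb =
      (fderiv ℝ (fun pq : Vec n × Vec m => f pq.1 pq.2) (xb, yb)).comp
        (ContinuousLinearMap.inr ℝ (Vec n) (Vec m)) := hfy.fderiv
  have hgy_eq : ∀ k, fderiv ℝ (fun y => g xb y k) yb =
      (fderiv ℝ (fun pq : Vec n × Vec m => g pq.1 pq.2 k) (xb, yb)).comp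
        (ContinuousLinearMap.inr ℝ (Vec n) (Vec m)) := fun k => (hgy k).fderiv
  have hfx_eq : fderiv ℝ (fun x => f x yb) xb =
      (fderiv ℝ (fun pq : Vec n × Vec m => f pq.1 pq.2) (xb, yb)).comp
        (ContinuousLinearMap.inl ℝ (Vec n) (Vec m)) := hfx.fderiv
  have hgx_eq : ∀ k, fderiv ℝ (fun x => g x yb k) xb =
      (fderiv ℝ (fun pq : Vec n × Vec m => g pq.1 pq.2 k) (xb, yb)).comp
        (ContinuousLinearMap.inl ℝ (Vec n) (Vec m)) := fun k => (hgx k).fderiv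
  -- lower-level KKT
  obtain ⟨w, hwnn, hwcomp, hweq⟩ := kkt (c₀ := fun y => f xb y) (c := fun k y => g xb y k)
    (xbar := yb) (D₀ := fderiv ℝ (f xb) yb) (D := fun k => fderiv ℝ (fun y => g xb y k) yb)
    (hfy.differentiableAt.hasFDerivAt) (fun k => (hgy k).differentiableAt.hasFDerivAt)
    hgfeas (Filter.Eventually.of_forall fun y hy => hlow y hy) hLMFCQ
  -- the multiplier functional c
  set c : (Vec n) →L[ℝ] ℝ := fderiv ℝ (fun x => f x yb) xb
      + ∑ k, w k • fderiv ℝ (fun x => g x yb k) xb with hc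
  have hwsum0 : ∑ k, w k * g xb yb k = 0 := Finset.sum_eq_zero fun k _ => hwcomp k
  -- the convex minorant argument: f x y' ≥ f xb yb + c (x - xb) on the feasible set
  have hmin : ∀ (x : Vec n) (y' : Vec m), (∀ k, g x y' k ≤ 0) →
      f xb yb + c (x - xb) ≤ f x y' := by
    intro x y' hy'
    set L : Vec n × Vec m → ℝ :=
      fun pq => f pq.1 pq.2 + ∑ k, w k * g pq.1 pq.2 k with hL
    have hLconv : ConvexOn ℝ Set.univ L := by
      refine ⟨convex_univ, ?_⟩
      intro s hs t ht a b ha hb hab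
      have h1 := hfconv.2 hs ht ha hb hab
      have h2 : ∀ k, w k * g (a • s + b • t).1 (a • s + b • t).2 k ≤
          w k * (a * g s.1 s.2 k + b * g t.1 t.2 k) := fun k =>
        mul_le_mul_of_nonneg_left (by
          have := (hgconv k).2 hs ht ha hb hab
          simpa [smul_eq_mul] using this) (hwnn k)
      have h3 : L (a • s + b • t) ≤ (a * f s.1 s.2 + b * f t.1 t.2) +
          ∑ k, w k * (a * g s.1 s.2 k + b * g t.1 t.2 k) := by
        refine add_le_add (by simpa [smul_eq_mul] using h1) (Finset.sum_le_sum fun k _ => h2 k)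
      refine h3.trans (le_of_eq ?_)
      simp only [hL, smul_eq_mul]
      rw [Finset.sum_congr rfl (fun k _ => by ring :
        ∀ k ∈ Finset.univ, w k * (a * g s.1 s.2 k + b * g t.1 t.2 k) =
          a * (w k * g s.1 s.2 k) + b * (w k * g t.1 t.2 k)),
        Finset.sum_add_distrib, ← Finset.mul_sum, ← Finset.mul_sum]
      ring
    set DL : (Vec n × Vec m) →L[ℝ] ℝ :=
      fderiv ℝ (fun pq : Vec n × Vec m => f pq.1 pq.2) (xb, yb)
        + ∑ k, w k • fderiv ℝ (fun pq : Vec n × Vec m => g pq.1 pq.2 k) (xb, yb) with hDL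
    have hLd : HasFDerivAt L DL (xb, yb) := by
      exact (hffd (xb, yb)).hasFDerivAt.add
        (HasFDerivAt.fun_sum fun k _ => ((hgfd k (xb, yb)).hasFDerivAt.const_mul (w k)))
    have htan := convexOn_ge_tangent hLconv hLd (y := (x, y'))
    have hsplit : ((x, y') : Vec n × Vec m) - (xb, yb) = (x - xb, (0 : Vec m)) + (0, y' - yb) := by
      simp [Prod.ext_iff]
    have hDLy : DL ((0 : Vec n), y' - yb) = 0 := by
      have happ := congrArg (fun T : (Vec m) →L[ℝ] ℝ => T (y' - yb)) hweq
      simp only [ContinuousLinearMap.add_apply, ContinuousLinearMap.sum_apply,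
        ContinuousLinearMap.smul_apply, ContinuousLinearMap.zero_apply, smul_eq_mul] at happ
      rw [hfy_eq, Finset.sum_congr rfl (fun k _ => by rw [hgy_eq k] :
        ∀ k ∈ Finset.univ, w k * (fderiv ℝ (fun y => g xb y k) yb) (y' - yb) =
          w k * ((fderiv ℝ (fun pq : Vec n × Vec m => g pq.1 pq.2 k) (xb, yb)).comp
            (ContinuousLinearMap.inr ℝ (Vec n) (Vec m))) (y' - yb))] at happ
      simpa [hDL, ContinuousLinearMap.add_apply, ContinuousLinearMap.sum_apply,
        ContinuousLinearMap.smul_apply, ContinuousLinearMap.comp_apply,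
        ContinuousLinearMap.inr_apply, smul_eq_mul] using happ
    have hDLx : DL (x - xb, (0 : Vec m)) = c (x - xb) := by
      simp only [hc, hDL, ContinuousLinearMap.add_apply, ContinuousLinearMap.sum_apply,
        ContinuousLinearMap.smul_apply, smul_eq_mul]
      rw [hfx_eq]
      rw [Finset.sum_congr rfl (fun k _ => by rw [hgx_eq k] :
        ∀ k ∈ Finset.univ, w k * (fderiv ℝ (fun x => g x yb k) xb) (x - xb) =
          w k * ((fderiv ℝ (fun pq : Vec n × Vec m => g pq.1 pq.2 k) (xb, yb)).comp
            (ContinuousLinearMap.inl ℝ (Vec n) (Vec m))) (x - xb))]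
      simp [ContinuousLinearMap.comp_apply, ContinuousLinearMap.inl_apply]
    have hLxb : L (xb, yb) = f xb yb := by
      simp only [hL]
      rw [hwsum0, add_zero]
    have hLxy : L (x, y') ≤ f x y' := by
      simp only [hL]
      have : ∑ k, w k * g x y' k ≤ 0 :=
        Finset.sum_nonpos fun k _ => mul_nonpos_of_nonneg_of_nonpos (hwnn k) (hy' k)
      linarith
    rw [hsplit, map_add, hDLy, hDLx, hLxb] at htan
    simp only [add_zero] at htan
    linarith
  -- partial calmness
  obtain ⟨lam0, hl0, ε, hε, hcalm'⟩ := hcalm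
  set Φ : Vec n × Vec m → ℝ :=
    fun pq => F pq.1 pq.2 + lam0 * f pq.1 pq.2 - lam0 * c (pq.1 - xb) with hΦ
  set cc : (Fin p ⊕ Fin q) → (Vec n × Vec m) → ℝ :=
    Sum.elim (fun j (pq : Vec n × Vec m) => G pq.1 pq.2 j)
      (fun k (pq : Vec n × Vec m) => g pq.1 pq.2 k) with hcc
  have hΦloc : ∀ᶠ pq in 𝓝 ((xb, yb) : Vec n × Vec m),
      (∀ i, cc i pq ≤ 0) → Φ (xb, yb) ≤ Φ pq := by
    filter_upwards [Metric.ball_mem_nhds (xb, yb) hε] with pq hball hfe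
    have hGf : ∀ j, G pq.1 pq.2 j ≤ 0 := fun j => hfe (Sum.inl j)
    have hgf : ∀ k, g pq.1 pq.2 k ≤ 0 := fun k => hfe (Sum.inr k)
    have hdist : dist ((pq.1, pq.2) : Vec n × Vec m) ((xb, yb) : Vec n × Vec m) < ε := by
      simpa using Metric.mem_ball.1 hball
    have hcal := hcalm' pq.1 pq.2 hdist hGf hgf
    rw [hphixb] at hcal
    have hsub0 : (f xb yb : EReal) - (f xb yb : EReal) = 0 := by
      rw [← EReal.coe_sub]; simp
    rw [hsub0, mul_zero, add_zero] at hcal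
    have hub : phi f g pq.1 ≤ (f pq.1 pq.2 : EReal) := by
      unfold phi; exact iInf₂_le pq.2 hgf
    have hlb : ((f xb yb + c (pq.1 - xb) : ℝ) : EReal) ≤ phi f g pq.1 := by
      unfold phi
      exact le_iInf₂ fun y' hy' => by exact_mod_cast hmin pq.1 y' hy'
    have hneT : phi f g pq.1 ≠ ⊤ := ne_top_of_le_ne_top (EReal.coe_ne_top _) hub
    have hneB : phi f g pq.1 ≠ ⊥ := (lt_of_lt_of_le (EReal.bot_lt_coe _) hlb).ne'
    have hrphi : phi f g pq.1 = (((phi f g pq.1).toReal : ℝ) : EReal) :=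
      (EReal.coe_toReal hneT hneB).symm
    set r : ℝ := (phi f g pq.1).toReal with hr
    rw [hrphi] at hcal hub hlb
    have hub' : r ≤ f pq.1 pq.2 := by exact_mod_cast hub
    have hlb' : f xb yb + c (pq.1 - xb) ≤ r := by exact_mod_cast hlb
    have hcal' : F xb yb ≤ F pq.1 pq.2 + lam0 * (f pq.1 pq.2 - r) := by
      have hco : ((F pq.1 pq.2 + lam0 * (f pq.1 pq.2 - r) : ℝ) : EReal) =
          (F pq.1 pq.2 : EReal) + (lam0 : ℝ) * ((f pq.1 pq.2 : EReal) - (r : EReal)) := by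
        rw [EReal.coe_add, EReal.coe_mul, EReal.coe_sub]
      rw [← hco] at hcal
      exact_mod_cast hcal
    have hk1 : lam0 * (f xb yb + c (pq.1 - xb)) ≤ lam0 * r :=
      mul_le_mul_of_nonneg_left hlb' hl0.le
    simp only [hΦ]
    have hc0 : c (xb - xb) = 0 := by rw [sub_self, map_zero]
    rw [hc0, mul_zero, sub_zero]
    linarith [hcal', hk1]
  -- derivative of Φ
  have hΦd : HasFDerivAt Φ
      (fderiv ℝ (fun pq : Vec n × Vec m => F pq.1 pq.2) (xb, yb)
        + lam0 • fderiv ℝ (fun pq : Vec n × Vec m => f pq.1 pq.2) (xb, yb)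
        - lam0 • (c.comp (ContinuousLinearMap.fst ℝ (Vec n) (Vec m)))) (xb, yb) := by
    have h2 : HasFDerivAt (fun pq : Vec n × Vec m => pq.1 - xb)
        (ContinuousLinearMap.fst ℝ (Vec n) (Vec m)) (xb, yb) :=
      (hasFDerivAt_fst).sub_const xb
    have h1 : HasFDerivAt (fun pq : Vec n × Vec m => c (pq.1 - xb))
        (c.comp (ContinuousLinearMap.fst ℝ (Vec n) (Vec m))) (xb, yb) :=
      (c.hasFDerivAt).comp (xb, yb) h2
    exact ((hFfd (xb, yb)).hasFDerivAt.add
      (((hffd (xb, yb)).hasFDerivAt).const_mul lam0)).sub (h1.const_mul lam0)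
  -- upper-level KKT
  have hccd : ∀ i, HasFDerivAt (cc i)
      (Sum.elim (fun j => fderiv ℝ (fun pq : Vec n × Vec m => G pq.1 pq.2 j) (xb, yb))
        (fun k => fderiv ℝ (fun pq : Vec n × Vec m => g pq.1 pq.2 k) (xb, yb)) i) (xb, yb) := by
    rintro (j | k)
    · exact (hGfd j (xb, yb)).hasFDerivAt
    · exact (hgfd k (xb, yb)).hasFDerivAt
  have hccfeas : ∀ i, cc i (xb, yb) ≤ 0 := by
    rintro (j | k)
    · exact hGfeas j
    · exact hgfeas k
  have hccmfcq : ∃ d, ∀ i, cc i ((xb, yb) : Vec n × Vec m) = 0 →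
      (Sum.elim (fun j => fderiv ℝ (fun pq : Vec n × Vec m => G pq.1 pq.2 j) (xb, yb))
        (fun k => fderiv ℝ (fun pq : Vec n × Vec m => g pq.1 pq.2 k) (xb, yb)) i) d < 0 := by
    obtain ⟨d, hd1, hd2⟩ := hMFCQ
    refine ⟨d, ?_⟩
    rintro (j | k) hi
    · exact hd1 j hi
    · exact hd2 k hi
  obtain ⟨μ, hμnn, hμcomp, hμeq⟩ := kkt (c₀ := Φ) (c := cc) (xbar := ((xb, yb) : Vec n × Vec m))
    hΦd hccd hccfeas hΦloc hccmfcq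
  -- assemble
  rw [Fintype.sum_sum_type] at hμeq
  simp only [Sum.elim_inl, Sum.elim_inr] at hμeq
  have hA : fderiv ℝ (fun pq : Vec n × Vec m => F pq.1 pq.2) (xb, yb)
      + ∑ j, μ (Sum.inl j) • fderiv ℝ (fun pq : Vec n × Vec m => G pq.1 pq.2 j) (xb, yb)
      + ∑ k, μ (Sum.inr k) • fderiv ℝ (fun pq : Vec n × Vec m => g pq.1 pq.2 k) (xb, yb)
      + lam0 • fderiv ℝ (fun pq : Vec n × Vec m => f pq.1 pq.2) (xb, yb)
      - lam0 • ((fderiv ℝ (fun x => f x yb) xb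
          + ∑ k, w k • fderiv ℝ (fun x => g x yb k) xb).comp
            (ContinuousLinearMap.fst ℝ (Vec n) (Vec m))) = 0 := by
    rw [← hc]
    calc fderiv ℝ (fun pq : Vec n × Vec m => F pq.1 pq.2) (xb, yb)
        + ∑ j, μ (Sum.inl j) • fderiv ℝ (fun pq : Vec n × Vec m => G pq.1 pq.2 j) (xb, yb)
        + ∑ k, μ (Sum.inr k) • fderiv ℝ (fun pq : Vec n × Vec m => g pq.1 pq.2 k) (xb, yb)
        + lam0 • fderiv ℝ (fun pq : Vec n × Vec m => f pq.1 pq.2) (xb, yb)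
        - lam0 • (c.comp (ContinuousLinearMap.fst ℝ (Vec n) (Vec m)))
        = (fderiv ℝ (fun pq : Vec n × Vec m => F pq.1 pq.2) (xb, yb)
            + lam0 • fderiv ℝ (fun pq : Vec n × Vec m => f pq.1 pq.2) (xb, yb)
            - lam0 • (c.comp (ContinuousLinearMap.fst ℝ (Vec n) (Vec m))))
          + (∑ j, μ (Sum.inl j) • fderiv ℝ (fun pq : Vec n × Vec m => G pq.1 pq.2 j) (xb, yb)
            + ∑ k, μ (Sum.inr k) • fderiv ℝ (fun pq : Vec n × Vec m => g pq.1 pq.2 k) (xb, yb)) := by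
          abel
      _ = 0 := hμeq
  have hCsum : ∑ j, μ (Sum.inl j) * G xb yb j = 0 :=
    Finset.sum_eq_zero fun j _ => hμcomp (Sum.inl j)
  have hDsum : ∑ k, μ (Sum.inr k) * g xb yb k = 0 :=
    Finset.sum_eq_zero fun k _ => hμcomp (Sum.inr k)
  exact ⟨lam0, hl0, fun j => μ (Sum.inl j), fun k => μ (Sum.inr k), w, yb, hA, hweq,
    ⟨fun j => hμnn (Sum.inl j), hGfeas, hCsum⟩,
    ⟨fun k => hμnn (Sum.inr k), hgfeas, hDsum⟩,
    ⟨hwnn, hgfeas, hwsum0⟩⟩
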